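/- Let P = P1 ∪ P2 be a propositional logic program such that P2 potentially uses P1. Then the set of stable models of P equals the union over all stable models M of P1 of the stable models of P2 ∪ facts(M). -/

import Mathlib

/-- A propositional logic-program rule `head :- pos, not neg`.
`head = none` represents a strong constraint (rule with empty head). -/
structure LPRule where
  head : Option ℕ
  pos : Finset ℕ
  neg : Finset ℕ
deriving DecidableEq

namespace LP

/-- Truth of a rule head w.r.t. an interpretation; an empty head is never true. -/
def headTrue (I : Set ℕ) : Option ℕ → Prop
  | none => False
  | some a => a ∈ I

/-- The body of a rule is true w.r.t. `I`. -/
def bodyTrue (I : Set ℕ) (r : LPRule) : Prop :=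
  (∀ b ∈ r.pos, b ∈ I) ∧ (∀ b ∈ r.neg, b ∉ I)

/-- `I` satisfies rule `r`. -/
def satRule (I : Set ℕ) (r : LPRule) : Prop := bodyTrue I r → headTrue I r.head

/-- `I` is a model of the program `P`. -/
def isModel (P : Set LPRule) (I : Set ℕ) : Prop := ∀ r ∈ P, satRule I r

/-- A positive (negation-free) program. -/
def isPositive (P : Set LPRule) : Prop := ∀ r ∈ P, r.neg = ∅

/-- A constraint-free program (no rules with empty head). -/
def constraintFree (P : Set LPRule) : Prop := ∀ r ∈ P, r.head ≠ none

/-- The Gelfond-Lifschitz reduct `P^I`. -/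
def reduct (P : Set LPRule) (I : Set ℕ) : Set LPRule :=
  (fun r => LPRule.mk r.head r.pos ∅) '' {r ∈ P | ∀ b ∈ r.neg, b ∉ I}

/-- `M` is the least model of `P`. -/
def isLeastModel (P : Set LPRule) (M : Set ℕ) : Prop :=
  isModel P M ∧ ∀ M', isModel P M' → M ⊆ M'

/-- `M` is a stable model of `P`: it is the least model of the reduct `P^M`. -/
def isStable (P : Set LPRule) (M : Set ℕ) : Prop := isLeastModel (reduct P M) M

/-- `facts S` is the set of facts `{p :- | p ∈ S}`. -/
def facts (S : Set ℕ) : Set LPRule := (fun p => LPRule.mk (some p) ∅ ∅) '' S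

/-- The atoms occurring in a rule. -/
def ruleAtoms (r : LPRule) : Set ℕ := {a | r.head = some a} ∪ ↑r.pos ∪ ↑r.neg

/-- The Herbrand base of a program: all atoms occurring in it. -/
def atoms (P : Set LPRule) : Set ℕ := ⋃ r ∈ P, ruleAtoms r

/-- `p` depends on `q`: some rule has head `p` and `q` in its body. -/
def dependsOn (P : Set LPRule) (p q : ℕ) : Prop :=
  ∃ r ∈ P, r.head = some p ∧ (q ∈ r.pos ∨ q ∈ r.neg)

/-- `P` is stratified: no rule with head `p` and `not q` in the body where
`q` transitively depends on `p`. -/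
def stratified (P : Set LPRule) : Prop :=
  ∀ r ∈ P, ∀ p, r.head = some p → ∀ q ∈ r.neg, ¬ Relation.TransGen (dependsOn P) q p

/-- Hypotheses `H` do not occur in rule heads of `P`. -/
def hypFree (P : Set LPRule) (H : Finset ℕ) : Prop :=
  ∀ r ∈ P, ∀ h ∈ H, r.head ≠ some h

/-- `S` is an admissible solution: `S ⊆ H` and some stable model of
`P ∪ facts S` makes all observations true. -/
def admissible (P : Set LPRule) (H obsP obsN : Finset ℕ) (S : Set ℕ) : Prop :=
  S ⊆ ↑H ∧ ∃ M, isStable (P ∪ facts S) M ∧ (∀ o ∈ obsP, o ∈ M) ∧ (∀ o ∈ obsN, o ∉ M)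

/-- `sum_γ`: total penalty of the hypotheses of `H` belonging to `S`. -/
noncomputable def cost (γ : ℕ → NNReal) (H : Finset ℕ) (S : Set ℕ) : NNReal :=
  ∑ h ∈ H, S.indicator γ h

/-- `S` is an optimal solution: admissible with minimal total penalty. -/
def optimal (P : Set LPRule) (H obsP obsN : Finset ℕ) (γ : ℕ → NNReal) (S : Set ℕ) : Prop :=
  admissible P H obsP obsN S ∧
  ∀ S', admissible P H obsP obsN S' → cost γ H S ≤ cost γ H S'

end LP

namespace LP

/-- `P2` potentially uses `P1`: no head atom of `P2` occurs in `P1`. -/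
def potentiallyUses (P2 P1 : Set LPRule) : Prop :=
  ∀ r ∈ P2, ∀ a, r.head = some a → a ∉ atoms P1

/-- The translated program `lpw(𝒫)`: the original program `P`, the guessing rules
`h :- sol h`, `sol h :- not nsol h`, `nsol h :- not sol h` for each hypothesis `h ∈ H`,
and the strong constraints `:- not a` (resp. `:- a`) for positive (resp. negative)
observations. -/
def lpw (P : Set LPRule) (H obsP obsN : Finset ℕ) (sol nsol : ℕ → ℕ) : Set LPRule :=
  P ∪ (⋃ h ∈ (↑H : Set ℕ),
        {LPRule.mk (some h) {sol h} ∅,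
         LPRule.mk (some (sol h)) ∅ {nsol h},
         LPRule.mk (some (nsol h)) ∅ {sol h}})
    ∪ ((fun a => LPRule.mk none ∅ {a}) '' ↑obsP)
    ∪ ((fun a => LPRule.mk none {a} ∅) '' ↑obsN)

/-- The atoms `sol h` and `nsol h` are pairwise distinct fresh atoms not occurring
in `P`, `H`, or among the observations. -/
def freshAtoms (P : Set LPRule) (H obsP obsN : Finset ℕ) (sol nsol : ℕ → ℕ) : Prop :=
  Function.Injective sol ∧ Function.Injective nsol ∧ (∀ h h', sol h ≠ nsol h') ∧
  ∀ h ∈ H, sol h ∉ atoms P ∪ ↑H ∪ ↑obsP ∪ ↑obsN ∧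
           nsol h ∉ atoms P ∪ ↑H ∪ ↑obsP ∪ ↑obsN

/-- The total weak-constraint penalty of a model `M`: the weak constraint `:~ h [γ(h)]`
is violated by `M` iff `h ∈ M`, so the penalty is the sum of `γ(h)` over `h ∈ H ∩ M`. -/
noncomputable def penalty (γ : ℕ → NNReal) (H : Finset ℕ) (M : Set ℕ) : NNReal :=
  cost γ H M

/-- `M` is a best model of the translated program: a stable model (which in particular
satisfies all strong constraints) minimizing the total weight of violated weak
constraints. -/
def isBest (P : Set LPRule) (H obsP obsN : Finset ℕ) (γ : ℕ → NNReal)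
    (sol nsol : ℕ → ℕ) (M : Set ℕ) : Prop :=
  isStable (lpw P H obsP obsN sol nsol) M ∧
  ∀ M', isStable (lpw P H obsP obsN sol nsol) M' → penalty γ H M ≤ penalty γ H M'

lemma mem_reduct {P : Set LPRule} {I : Set ℕ} {r' : LPRule} :
    r' ∈ reduct P I ↔ ∃ r, r ∈ P ∧ (∀ b ∈ r.neg, b ∉ I) ∧ r' = ⟨r.head, r.pos, ∅⟩ := by
  constructor
  · rintro ⟨r, ⟨hrP, hneg⟩, rfl⟩
    exact ⟨r, hrP, hneg, rfl⟩
  · rintro ⟨r, hrP, hneg, rfl⟩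
    exact ⟨r, ⟨hrP, hneg⟩, rfl⟩

lemma reduct_union (P Q : Set LPRule) (I : Set ℕ) :
    reduct (P ∪ Q) I = reduct P I ∪ reduct Q I := by
  ext r'
  simp only [Set.mem_union, mem_reduct]
  constructor
  · rintro ⟨r, hr | hr, hneg, rfl⟩
    exacts [Or.inl ⟨r, hr, hneg, rfl⟩, Or.inr ⟨r, hr, hneg, rfl⟩]
  · rintro (⟨r, hr, hneg, rfl⟩ | ⟨r, hr, hneg, rfl⟩)
    exacts [⟨r, Or.inl hr, hneg, rfl⟩, ⟨r, Or.inr hr, hneg, rfl⟩]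

lemma reduct_facts (S I : Set ℕ) : reduct (facts S) I = facts S := by
  ext r'
  simp only [mem_reduct]
  constructor
  · rintro ⟨r, ⟨p, hp, rfl⟩, -, rfl⟩
    exact ⟨p, hp, rfl⟩
  · rintro ⟨p, hp, rfl⟩
    exact ⟨⟨some p, ∅, ∅⟩, ⟨p, hp, rfl⟩, by simp, rfl⟩

lemma isModel_union {P Q : Set LPRule} {I : Set ℕ} :
    isModel (P ∪ Q) I ↔ isModel P I ∧ isModel Q I := by
  constructor
  · intro h
    exact ⟨fun r hr => h r (Or.inl hr), fun r hr => h r (Or.inr hr)⟩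
  · rintro ⟨h1, h2⟩ r hr
    rcases hr with hr | hr
    exacts [h1 r hr, h2 r hr]

lemma isModel_facts_iff {S N : Set ℕ} : isModel (facts S) N ↔ S ⊆ N := by
  constructor
  · intro h p hp
    have := h _ ⟨p, hp, rfl⟩ ⟨by simp, by simp⟩
    exact this
  · rintro h r' ⟨p, hp, rfl⟩ -
    exact h hp

lemma pos_subset_atoms {P : Set LPRule} {r : LPRule} (h : r ∈ P) : ↑r.pos ⊆ atoms P :=
  fun b hb => Set.mem_biUnion h (Or.inl (Or.inr hb))

lemma neg_subset_atoms {P : Set LPRule} {r : LPRule} (h : r ∈ P) : ↑r.neg ⊆ atoms P :=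
  fun b hb => Set.mem_biUnion h (Or.inr hb)

lemma head_mem_atoms {P : Set LPRule} {r : LPRule} {a : ℕ} (h : r ∈ P)
    (ha : r.head = some a) : a ∈ atoms P :=
  Set.mem_biUnion h (Or.inl (Or.inl ha))

lemma reduct_congr {P : Set LPRule} {M N : Set ℕ}
    (h : M ∩ atoms P = N ∩ atoms P) : reduct P M = reduct P N := by
  ext r'
  simp only [mem_reduct]
  constructor <;> rintro ⟨r, hrP, hneg, rfl⟩ <;>
    refine ⟨r, hrP, fun b hb hbX => hneg b hb ?_, rfl⟩
  · have hb2 : b ∈ N ∩ atoms P := ⟨hbX, neg_subset_atoms hrP hb⟩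
    rw [← h] at hb2
    exact hb2.1
  · have hb2 : b ∈ M ∩ atoms P := ⟨hbX, neg_subset_atoms hrP hb⟩
    rw [h] at hb2
    exact hb2.1

lemma isModel_reduct_inter {P : Set LPRule} {I M N : Set ℕ}
    (hM : isModel (reduct P I) M) (hN : isModel (reduct P I) N) :
    isModel (reduct P I) (M ∩ N) := by
  intro r' hr' hb
  obtain ⟨r, hrP, hneg, rfl⟩ := mem_reduct.mp hr'
  have hhM : headTrue M r.head := hM ⟨r.head, r.pos, ∅⟩ hr' ⟨fun b hb' => (hb.1 b hb').1, by simp⟩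
  have hhN : headTrue N r.head := hN ⟨r.head, r.pos, ∅⟩ hr' ⟨fun b hb' => (hb.1 b hb').2, by simp⟩
  show headTrue (M ∩ N) r.head
  cases hhead : r.head with
  | none => rw [hhead] at hhM; exact hhM.elim
  | some a => rw [hhead] at hhM hhN; exact ⟨hhM, hhN⟩

lemma stable_subset_atoms {P : Set LPRule} {M : Set ℕ} (h : isStable P M) :
    M ⊆ atoms P := by
  have hmod : isModel (reduct P M) (M ∩ atoms P) := by
    intro r' hr' hb
    obtain ⟨r, hrP, hneg, rfl⟩ := mem_reduct.mp hr'
    have hh : headTrue M r.head := h.1 ⟨r.head, r.pos, ∅⟩ hr' ⟨fun b hb' => (hb.1 b hb').1, by simp⟩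
    show headTrue (M ∩ atoms P) r.head
    cases hhead : r.head with
    | none => rw [hhead] at hh; exact hh.elim
    | some a => rw [hhead] at hh; exact ⟨hh, head_mem_atoms hrP hhead⟩
  intro a ha
  exact (h.2 _ hmod ha).2

end LP

/-- if `P2` potentially uses `P1`, the stable models of `P1 ∪ P2`
are exactly the stable models of `P2 ∪ facts(M1)` for stable models `M1` of `P1`. -/
theorem splitting_union (P1 P2 : Set LPRule)
    (hFin1 : P1.Finite) (hFin2 : P2.Finite)
    (hPU : LP.potentiallyUses P2 P1) :
    {M | LP.isStable (P1 ∪ P2) M} =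
      ⋃ M1 ∈ {M1 | LP.isStable P1 M1}, {M | LP.isStable (P2 ∪ LP.facts M1) M} := by
  ext M
  simp only [Set.mem_setOf_eq, Set.mem_iUnion, exists_prop]
  constructor
  · intro hM
    obtain ⟨hMmod, hMmin⟩ := hM
    rw [LP.reduct_union] at hMmod hMmin
    obtain ⟨hmod1, hmod2⟩ := LP.isModel_union.mp hMmod
    have hM1A : (M ∩ LP.atoms P1) ∩ LP.atoms P1 = M ∩ LP.atoms P1 := by
      rw [Set.inter_assoc, Set.inter_self]
    have hred1 : LP.reduct P1 (M ∩ LP.atoms P1) = LP.reduct P1 M := LP.reduct_congr hM1A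
    refine ⟨M ∩ LP.atoms P1, ?_, ?_⟩
    · show LP.isLeastModel (LP.reduct P1 (M ∩ LP.atoms P1)) (M ∩ LP.atoms P1)
      rw [hred1]
      constructor
      · intro r' hr' hb
        obtain ⟨r, hrP, hneg, rfl⟩ := LP.mem_reduct.mp hr'
        have hh : LP.headTrue M r.head :=
          hmod1 ⟨r.head, r.pos, ∅⟩ hr' ⟨fun b hb' => (hb.1 b hb').1, by simp⟩
        show LP.headTrue (M ∩ LP.atoms P1) r.head
        cases hhead : r.head with
        | none => rw [hhead] at hh; exact hh.elim
        | some a => rw [hhead] at hh; exact ⟨hh, LP.head_mem_atoms hrP hhead⟩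
      · intro N hN
        have hN' : LP.isModel (LP.reduct P1 M) (N ∩ M) := LP.isModel_reduct_inter hN hmod1
        have hcand : LP.isModel (LP.reduct P1 M ∪ LP.reduct P2 M)
            ((N ∩ M ∩ LP.atoms P1) ∪ (M \ LP.atoms P1)) := by
          apply LP.isModel_union.mpr
          constructor
          · intro r' hr' hb
            obtain ⟨r, hrP, hneg, rfl⟩ := LP.mem_reduct.mp hr'
            have hpos : ∀ b ∈ r.pos, b ∈ N ∩ M := by
              intro b hb'
              rcases hb.1 b hb' with h | h
              · exact h.1
              · exact absurd (LP.pos_subset_atoms hrP hb') h.2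
            have hh : LP.headTrue (N ∩ M) r.head := hN' ⟨r.head, r.pos, ∅⟩ hr' ⟨hpos, by simp⟩
            show LP.headTrue _ r.head
            cases hhead : r.head with
            | none => rw [hhead] at hh; exact hh.elim
            | some a =>
              rw [hhead] at hh
              exact Or.inl ⟨hh, LP.head_mem_atoms hrP hhead⟩
          · intro r' hr' hb
            obtain ⟨r, hrP, hneg, rfl⟩ := LP.mem_reduct.mp hr'
            have hpos : ∀ b ∈ r.pos, b ∈ M := by
              intro b hb'
              rcases hb.1 b hb' with h | h
              · exact h.1.2
              · exact h.1
            have hh : LP.headTrue M r.head := hmod2 ⟨r.head, r.pos, ∅⟩ hr' ⟨hpos, by simp⟩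
            show LP.headTrue _ r.head
            cases hhead : r.head with
            | none => rw [hhead] at hh; exact hh.elim
            | some a =>
              rw [hhead] at hh
              exact Or.inr ⟨hh, hPU r hrP a hhead⟩
        have hsub := hMmin _ hcand
        rintro a ⟨haM, haA⟩
        rcases hsub haM with h | h
        · exact h.1.1
        · exact absurd haA h.2
    · show LP.isLeastModel (LP.reduct (P2 ∪ LP.facts (M ∩ LP.atoms P1)) M) M
      rw [LP.reduct_union, LP.reduct_facts]
      constructor
      · exact LP.isModel_union.mpr ⟨hmod2, LP.isModel_facts_iff.mpr fun a ha => ha.1⟩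
      · intro N hN
        obtain ⟨hN2, hNF⟩ := LP.isModel_union.mp hN
        have hN2' := LP.isModel_reduct_inter hN2 hmod2
        have hM1N : M ∩ LP.atoms P1 ⊆ N := LP.isModel_facts_iff.mp hNF
        have hcand : LP.isModel (LP.reduct P1 M ∪ LP.reduct P2 M) (N ∩ M) := by
          apply LP.isModel_union.mpr
          refine ⟨?_, hN2'⟩
          intro r' hr' hb
          obtain ⟨r, hrP, hneg, rfl⟩ := LP.mem_reduct.mp hr'
          have hpos : ∀ b ∈ r.pos, b ∈ M := fun b hb' => (hb.1 b hb').2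
          have hh : LP.headTrue M r.head := hmod1 ⟨r.head, r.pos, ∅⟩ hr' ⟨hpos, by simp⟩
          show LP.headTrue (N ∩ M) r.head
          cases hhead : r.head with
          | none => rw [hhead] at hh; exact hh.elim
          | some a =>
            rw [hhead] at hh
            exact ⟨hM1N ⟨hh, LP.head_mem_atoms hrP hhead⟩, hh⟩
        intro a ha
        exact (hMmin _ hcand ha).1
  · rintro ⟨M1, hst1, hst2⟩
    have hM1atoms : M1 ⊆ LP.atoms P1 := LP.stable_subset_atoms hst1
    obtain ⟨h1mod, h1min⟩ := hst1
    have hst2' : LP.isLeastModel (LP.reduct (P2 ∪ LP.facts M1) M) M := hst2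
    rw [LP.reduct_union, LP.reduct_facts] at hst2'
    obtain ⟨hQmod, hQmin⟩ := hst2'
    obtain ⟨hmod2, hmodF⟩ := LP.isModel_union.mp hQmod
    have hM1M : M1 ⊆ M := LP.isModel_facts_iff.mp hmodF
    have hMA1 : M ∩ LP.atoms P1 = M1 := by
      apply Set.Subset.antisymm
      · have hcand : LP.isModel (LP.reduct P2 M ∪ LP.facts M1)
            (M1 ∪ (M \ LP.atoms P1)) := by
          apply LP.isModel_union.mpr
          constructor
          · intro r' hr' hb
            obtain ⟨r, hrP, hneg, rfl⟩ := LP.mem_reduct.mp hr'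
            have hpos : ∀ b ∈ r.pos, b ∈ M := by
              intro b hb'
              rcases hb.1 b hb' with h | h
              · exact hM1M h
              · exact h.1
            have hh : LP.headTrue M r.head := hmod2 ⟨r.head, r.pos, ∅⟩ hr' ⟨hpos, by simp⟩
            show LP.headTrue _ r.head
            cases hhead : r.head with
            | none => rw [hhead] at hh; exact hh.elim
            | some a =>
              rw [hhead] at hh
              exact Or.inr ⟨hh, hPU r hrP a hhead⟩
          · exact LP.isModel_facts_iff.mpr Set.subset_union_left
        have hsub := hQmin _ hcand
        rintro a ⟨haM, haA⟩
        rcases hsub haM with h | h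
        · exact h
        · exact absurd haA h.2
      · exact fun a ha => ⟨hM1M ha, hM1atoms ha⟩
    have hredeq : LP.reduct P1 M = LP.reduct P1 M1 := by
      apply LP.reduct_congr
      rw [hMA1]
      exact (Set.inter_eq_left.mpr hM1atoms).symm
    have hmod1M : LP.isModel (LP.reduct P1 M) M := by
      rw [hredeq]
      intro r' hr' hb
      obtain ⟨r, hrP, hneg, rfl⟩ := LP.mem_reduct.mp hr'
      have hpos : ∀ b ∈ r.pos, b ∈ M1 := by
        intro b hb'
        have hb2 : b ∈ M ∩ LP.atoms P1 := ⟨hb.1 b hb', LP.pos_subset_atoms hrP hb'⟩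
        rwa [hMA1] at hb2
      have hh : LP.headTrue M1 r.head := h1mod ⟨r.head, r.pos, ∅⟩ hr' ⟨hpos, by simp⟩
      show LP.headTrue M r.head
      cases hhead : r.head with
      | none => rw [hhead] at hh; exact hh.elim
      | some a => rw [hhead] at hh; exact hM1M hh
    refine ⟨?_, ?_⟩
    · show LP.isModel (LP.reduct (P1 ∪ P2) M) M
      rw [LP.reduct_union]
      exact LP.isModel_union.mpr ⟨hmod1M, hmod2⟩
    · intro N hN
      rw [LP.reduct_union] at hN
      obtain ⟨hN1, hN2⟩ := LP.isModel_union.mp hN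
      have hN1' := LP.isModel_reduct_inter hN1 hmod1M
      have hN2' := LP.isModel_reduct_inter hN2 hmod2
      have hsubM1 : M1 ⊆ N ∩ M := h1min _ (hredeq ▸ hN1')
      have hcand : LP.isModel (LP.reduct P2 M ∪ LP.facts M1) (N ∩ M) :=
        LP.isModel_union.mpr ⟨hN2', LP.isModel_facts_iff.mpr hsubM1⟩
      intro a ha
      exact (hQmin _ hcand ha).1
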